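/- Every matrix A ∈ h₂(E) with det(A) = 1 and tr(A) > 0 is of the form M M* for some 2×2 matrix M with entries in the Eisenstein integers and det(M) a unit of E of absolute value 1 — in particular A is positive definite and unimodular over E. -/

import Mathlib

open Complex Matrix

noncomputable def eisOmega : ℂ := Complex.exp (2 * Real.pi * I / 3)

noncomputable def eisSet : Set ℂ := {z : ℂ | ∃ a b : ℤ, z = a + b * eisOmega}

noncomputable def hermEis : Set (Matrix (Fin 2) (Fin 2) ℂ) :=
  {A | A.IsHermitian ∧ ∀ i j, A i j ∈ eisSet}

lemma omega_re : eisOmega.re = -(1/2) := by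
  have : (2 * Real.pi * I / 3 : ℂ) = (↑(2 * Real.pi / 3) : ℝ) * I := by push_cast; ring
  rw [eisOmega, this, Complex.exp_ofReal_mul_I_re]
  rw [show (2 * Real.pi / 3) = Real.pi - Real.pi/3 by ring, Real.cos_pi_sub, Real.cos_pi_div_three]

lemma omega_im : eisOmega.im = Real.sqrt 3 / 2 := by
  have : (2 * Real.pi * I / 3 : ℂ) = (↑(2 * Real.pi / 3) : ℝ) * I := by push_cast; ring
  rw [eisOmega, this, Complex.exp_ofReal_mul_I_im]
  rw [show (2 * Real.pi / 3) = Real.pi - Real.pi/3 by ring, Real.sin_pi_sub, Real.sin_pi_div_three]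

lemma sq3 : Real.sqrt 3 ^ 2 = 3 := Real.sq_sqrt (by norm_num)

lemma omega_sq : eisOmega ^ 2 + eisOmega + 1 = 0 := by
  have h3 := sq3
  apply Complex.ext <;>
    simp [pow_two, Complex.add_re, Complex.add_im, Complex.mul_re, Complex.mul_im,
      omega_re, omega_im] <;> nlinarith [h3]

lemma conj_omega : (starRingEnd ℂ) eisOmega = -1 - eisOmega := by
  apply Complex.ext <;> simp [omega_re, omega_im] <;> norm_num

lemma eis_int (n : ℤ) : (n : ℂ) ∈ eisSet := ⟨n, 0, by simp⟩
lemma eis_zero : (0 : ℂ) ∈ eisSet := ⟨0, 0, by simp⟩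
lemma eis_one : (1 : ℂ) ∈ eisSet := ⟨1, 0, by simp⟩
lemma eis_neg_one : (-1 : ℂ) ∈ eisSet := ⟨-1, 0, by simp⟩

lemma eis_add {z w : ℂ} (hz : z ∈ eisSet) (hw : w ∈ eisSet) : z + w ∈ eisSet := by
  obtain ⟨a, b, rfl⟩ := hz; obtain ⟨c, d, rfl⟩ := hw
  exact ⟨a + c, b + d, by push_cast; ring⟩

lemma eis_neg {z : ℂ} (hz : z ∈ eisSet) : -z ∈ eisSet := by
  obtain ⟨a, b, rfl⟩ := hz; exact ⟨-a, -b, by push_cast; ring⟩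

lemma eis_sub {z w : ℂ} (hz : z ∈ eisSet) (hw : w ∈ eisSet) : z - w ∈ eisSet := by
  rw [sub_eq_add_neg]; exact eis_add hz (eis_neg hw)

lemma eis_mul {z w : ℂ} (hz : z ∈ eisSet) (hw : w ∈ eisSet) : z * w ∈ eisSet := by
  obtain ⟨a, b, rfl⟩ := hz; obtain ⟨c, d, rfl⟩ := hw
  refine ⟨a * c - b * d, a * d + b * c - b * d, ?_⟩
  push_cast
  linear_combination (b * d : ℂ) * omega_sq

lemma eis_conj {z : ℂ} (hz : z ∈ eisSet) : (starRingEnd ℂ) z ∈ eisSet := by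
  obtain ⟨a, b, rfl⟩ := hz
  refine ⟨a - b, -b, ?_⟩
  rw [map_add, _root_.map_mul, conj_omega]
  simp only [map_intCast]
  push_cast
  ring

lemma eis_real {z : ℂ} (hz : z ∈ eisSet) (him : z.im = 0) : ∃ n : ℤ, z = (n : ℂ) := by
  obtain ⟨a, b, rfl⟩ := hz
  have h : ((a : ℂ) + b * eisOmega).im = b * (Real.sqrt 3 / 2) := by
    simp [Complex.add_im, Complex.mul_im, omega_re, omega_im]
  rw [h] at him
  clear h
  have h3 : Real.sqrt 3 ≠ 0 := by positivity
  have hb : (b : ℝ) = 0 := by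
    rcases mul_eq_zero.mp him with h | h
    · exact h
    · exfalso; apply h3; linarith
  have hb' : b = 0 := by exact_mod_cast hb
  exact ⟨a, by rw [hb']; simp⟩

lemma normSq_eis (s t : ℝ) : Complex.normSq ((s : ℂ) + t * eisOmega) = s^2 - s*t + t^2 := by
  have h3 := sq3
  simp [Complex.normSq_apply, Complex.add_re, Complex.add_im, Complex.mul_re, Complex.mul_im,
    omega_re, omega_im]
  nlinarith [h3]

lemma eis_round (z : ℂ) : ∃ q ∈ eisSet, Complex.normSq (z - q) ≤ 7/16 := by
  set v : ℝ := 2 * z.im / Real.sqrt 3 with hv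
  set u : ℝ := z.re + v / 2 with hu
  have h3 : Real.sqrt 3 ≠ 0 := by positivity
  have hz : z = (u : ℂ) + v * eisOmega := by
    apply Complex.ext
    · simp [Complex.add_re, Complex.mul_re, omega_re, omega_im, hu]; ring
    · simp [Complex.add_im, Complex.mul_im, omega_re, omega_im, hv]
      field_simp
  set n : ℤ := round v with hn
  set δ : ℝ := v - n with hδ
  set m : ℤ := round (u - δ/2) with hm
  set t : ℝ := (u - δ/2) - m with ht
  have hδb : |δ| ≤ 1/2 := abs_sub_round v
  have htb : |t| ≤ 1/2 := abs_sub_round (u - δ/2)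
  refine ⟨(m : ℂ) + n * eisOmega, ⟨m, n, rfl⟩, ?_⟩
  have hzq : z - ((m : ℂ) + n * eisOmega) = ((u - m : ℝ) : ℂ) + ((v - n : ℝ) : ℂ) * eisOmega := by
    rw [hz]; push_cast; ring
  rw [hzq, normSq_eis]
  obtain ⟨hδ1, hδ2'⟩ := abs_le.mp hδb
  obtain ⟨ht1, ht2'⟩ := abs_le.mp htb
  have hδ2 : δ^2 ≤ 1/4 := by nlinarith
  have ht2 : t^2 ≤ 1/4 := by nlinarith
  have hum : u - m = t + δ/2 := by rw [ht]; ring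
  have hvn : v - n = δ := hδ
  rw [hum, hvn]
  nlinarith

lemma eis_mat_mul {M N : Matrix (Fin 2) (Fin 2) ℂ} (hM : ∀ i j, M i j ∈ eisSet)
    (hN : ∀ i j, N i j ∈ eisSet) : ∀ i j, (M * N) i j ∈ eisSet := by
  intro i j
  rw [Matrix.mul_apply, Fin.sum_univ_two]
  exact eis_add (eis_mul (hM i 0) (hN 0 j)) (eis_mul (hM i 1) (hN 1 j))

lemma main_aux : ∀ nn : ℕ, ∀ A : Matrix (Fin 2) (Fin 2) ℂ, A ∈ hermEis → A.det = 1 →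
    0 < A.trace.re → A.trace.re ≤ nn → (A 0 0).re ≤ (A 1 1).re →
    ∃ M : Matrix (Fin 2) (Fin 2) ℂ, (∀ i j, M i j ∈ eisSet) ∧
      (M.det = 1 ∨ M.det = -1) ∧ A = M * Mᴴ := by
  intro nn
  induction nn using Nat.strong_induction_on with
  | _ nn ih =>
  intro A hA hdet htr htrn hle
  obtain ⟨hherm, hent⟩ := hA
  obtain ⟨na, hna⟩ := eis_real (hent 0 0)
    (Complex.conj_eq_iff_im.mp (hherm.apply 0 0))
  obtain ⟨nd, hnd⟩ := eis_real (hent 1 1)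
    (Complex.conj_eq_iff_im.mp (hherm.apply 1 1))
  set b := A 0 1 with hb
  have hB : A 1 0 = (starRingEnd ℂ) b := (hherm.apply 1 0).symm
  have hbe : b ∈ eisSet := hent 0 1
  have hAeq : A = !![(na : ℂ), b; (starRingEnd ℂ) b, (nd : ℂ)] := by
    rw [Matrix.eta_fin_two A, ← hna, ← hnd, ← hb, hB]
  -- determinant equation
  have hdetC : (na : ℂ) * nd - b * (starRingEnd ℂ) b = 1 := by
    rw [Matrix.det_fin_two, ← hb, hB, hna, hnd] at hdet
    linear_combination hdet
  have hdetR : (na : ℝ) * nd = 1 + Complex.normSq b := by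
    have h2 : (na : ℂ) * nd = ((1 + Complex.normSq b : ℝ) : ℂ) := by
      push_cast
      rw [← Complex.mul_conj]
      linear_combination hdetC
    exact_mod_cast h2
  -- trace facts
  have htrA : A.trace.re = (na : ℝ) + nd := by
    rw [Matrix.trace_fin_two, hna, hnd]
    push_cast
    simp
  rw [htrA] at htr htrn
  have hleR : (na : ℝ) ≤ nd := by rw [hna, hnd] at hle; exact_mod_cast hle
  have hnsq : 0 ≤ Complex.normSq b := Complex.normSq_nonneg b
  have hnapos : 0 < na := by
    rcases lt_or_ge 0 na with h | h
    · exact h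
    · exfalso
      have h1 : (na : ℝ) ≤ 0 := by exact_mod_cast h
      nlinarith
  have hnale : 1 ≤ na := hnapos
  rcases eq_or_lt_of_le hnale with hna1 | hna2
  · -- base case: na = 1
    refine ⟨!![1, 0; (starRingEnd ℂ) b, 1], ?_, ?_, ?_⟩
    · intro i j
      fin_cases i <;> fin_cases j <;> simp <;>
        first
          | exact eis_one
          | exact eis_zero
          | exact eis_conj hbe
    · left
      rw [Matrix.det_fin_two_of]
      ring
    · have ha1 : (na : ℂ) = 1 := by rw [← hna1]; norm_num
      rw [hAeq]
      ext i j
      fin_cases i <;> fin_cases j <;>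
        simp [Matrix.mul_apply, Fin.sum_univ_two, Matrix.conjTranspose_apply]
      · exact hna1.symm
      · linear_combination hdetC - (nd : ℂ) * ha1
  · -- inductive step: na ≥ 2
    have hna2' : (2 : ℝ) ≤ na := by exact_mod_cast hna2
    have hnaR : (0:ℝ) < na := by exact_mod_cast hnapos
    have hna0C : (na : ℂ) ≠ 0 := by
      exact_mod_cast (ne_of_gt hnaR)
    obtain ⟨q, hqe, hqb⟩ := eis_round (b / (na : ℂ))
    have hrnorm : Complex.normSq (b - q * na) ≤ 7/16 * (na:ℝ)^2 := by
      have h1 : b - q * (na : ℂ) = (b / na - q) * na := by field_simp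
      have h2 : Complex.normSq ((na : ℂ)) = (na : ℝ)^2 := by
        simp [Complex.normSq_apply]
        ring
      rw [h1, Complex.normSq_mul, h2]
      nlinarith [Complex.normSq_nonneg (b / (na:ℂ) - q)]
    have hconjr : (starRingEnd ℂ) (b - q * (na:ℂ)) =
        (starRingEnd ℂ) b - (starRingEnd ℂ) q * (na:ℂ) := by
      rw [map_sub, _root_.map_mul, map_intCast]
    have hkeyC : ((nd:ℂ) - q * (starRingEnd ℂ) b - (starRingEnd ℂ) q * b
          + na * (q * (starRingEnd ℂ) q)) * na
        = 1 + (b - q * (na:ℂ)) * ((starRingEnd ℂ) b - (starRingEnd ℂ) q * (na:ℂ)) := by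
      linear_combination hdetC
    have hkey2 : ((nd:ℂ) - q * (starRingEnd ℂ) b - (starRingEnd ℂ) q * b
          + na * (q * (starRingEnd ℂ) q)) * na
        = ((1 + Complex.normSq (b - q * (na:ℂ)) : ℝ) : ℂ) := by
      push_cast
      rw [← Complex.mul_conj (b - q * (na:ℂ)), hconjr]
      linear_combination hkeyC
    have hDe : ((nd:ℂ) - q * (starRingEnd ℂ) b - (starRingEnd ℂ) q * b
          + na * (q * (starRingEnd ℂ) q)) ∈ eisSet := by
      refine eis_add (eis_sub (eis_sub (eis_int nd) (eis_mul hqe (eis_conj hbe)))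
        (eis_mul (eis_conj hqe) hbe)) (eis_mul (eis_int na) (eis_mul hqe (eis_conj hqe)))
    have hDim : ((nd:ℂ) - q * (starRingEnd ℂ) b - (starRingEnd ℂ) q * b
          + na * (q * (starRingEnd ℂ) q)).im = 0 := by
      have hD : ((nd:ℂ) - q * (starRingEnd ℂ) b - (starRingEnd ℂ) q * b
          + na * (q * (starRingEnd ℂ) q))
          = (((1 + Complex.normSq (b - q * (na:ℂ)))/na : ℝ) : ℂ) := by
        rw [Complex.ofReal_div, Complex.ofReal_intCast, eq_div_iff hna0C]
        exact hkey2
      rw [hD]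
      exact Complex.ofReal_im _
    obtain ⟨nD, hnD⟩ := eis_real hDe hDim
    have hDR : (nD : ℝ) * na = 1 + Complex.normSq (b - q * (na:ℂ)) := by
      rw [hnD] at hkey2
      exact_mod_cast hkey2
    have hnDlt : (nD : ℝ) < na := by nlinarith [Complex.normSq_nonneg (b - q * (na:ℂ))]
    have hnDpos : (0 : ℝ) < nD := by nlinarith [Complex.normSq_nonneg (b - q * (na:ℂ))]
    have hnDltZ : nD < na := by exact_mod_cast hnDlt
    have hnDposZ : 0 < nD := by exact_mod_cast hnDpos
    have hleZ : na ≤ nd := by exact_mod_cast hleR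
    have htrnZ : na + nd ≤ (nn : ℤ) := by exact_mod_cast htrn
    have hnn1 : 1 ≤ nn := by omega
    -- the reduced matrix
    set A' : Matrix (Fin 2) (Fin 2) ℂ :=
      !![(nD : ℂ), (starRingEnd ℂ) b - (starRingEnd ℂ) q * (na:ℂ);
         b - q * (na:ℂ), (na : ℂ)] with hA'
    have hA'herm : A'.IsHermitian := by
      unfold Matrix.IsHermitian
      rw [hA']
      ext i j
      fin_cases i <;> fin_cases j <;>
        simp [Matrix.conjTranspose_apply, map_sub, _root_.map_mul, map_intCast,
          Complex.conj_conj]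
    have hA'ent : ∀ i j, A' i j ∈ eisSet := by
      intro i j
      rw [hA']
      fin_cases i <;> fin_cases j <;> simp <;>
        first
          | exact eis_int nD
          | exact eis_sub (eis_conj hbe) (eis_mul (eis_conj hqe) (eis_int na))
          | exact eis_sub hbe (eis_mul hqe (eis_int na))
          | exact eis_int na
    have hA'det : A'.det = 1 := by
      rw [hA', Matrix.det_fin_two_of, ← hnD]
      linear_combination hkeyC
    have hA'tr : A'.trace.re = (nD : ℝ) + na := by
      rw [hA', Matrix.trace_fin_two_of]
      push_cast
      simp
    have hA'trpos : 0 < A'.trace.re := by rw [hA'tr]; positivity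
    have hA'trn : A'.trace.re ≤ (nn - 1 : ℕ) := by
      rw [hA'tr]
      have h1 : nD + na ≤ (nn : ℤ) - 1 := by omega
      have h2 : ((nn - 1 : ℕ) : ℝ) = (nn : ℝ) - 1 := by
        rw [Nat.cast_sub hnn1]; simp
      rw [h2]
      exact_mod_cast h1
    have hA'le : (A' 0 0).re ≤ (A' 1 1).re := by
      rw [hA']
      simp
      exact_mod_cast le_of_lt hnDltZ
    obtain ⟨N, hNent, hNdet, hNeq⟩ := ih (nn - 1) (by omega) A' ⟨hA'herm, hA'ent⟩
      hA'det hA'trpos hA'trn hA'le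
    set L : Matrix (Fin 2) (Fin 2) ℂ := !![0, 1; 1, (starRingEnd ℂ) q] with hL
    refine ⟨L * N, ?_, ?_, ?_⟩
    · refine eis_mat_mul ?_ hNent
      intro i j
      rw [hL]
      fin_cases i <;> fin_cases j <;> simp <;>
        first
          | exact eis_zero
          | exact eis_one
          | exact eis_conj hqe
    · have hdL : L.det = -1 := by
        rw [hL, Matrix.det_fin_two_of]
        ring
      rw [Matrix.det_mul, hdL]
      rcases hNdet with h | h
      · right; rw [h]; ring
      · left; rw [h]; ring
    · have hLA : A = L * A' * Lᴴ := by
        rw [hAeq, hA', hL]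
        ext i j
        fin_cases i <;> fin_cases j <;>
          simp [Matrix.mul_apply, Fin.sum_univ_two, Matrix.conjTranspose_apply,
            Complex.conj_conj, map_sub, _root_.map_mul, map_intCast]
        all_goals try ring
        linear_combination hnD
      rw [hLA, hNeq, Matrix.conjTranspose_mul]
      simp [Matrix.mul_assoc]

/-- Every `A ∈ h₂(E)` with `det A = 1` and `tr A > 0` is `M M*` for some matrix
`M` over the Eisenstein integers whose determinant is a unit of `E` of absolute
value 1. -/
theorem stmt_15 (A : Matrix (Fin 2) (Fin 2) ℂ) (hA : A ∈ hermEis)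
    (hdet : A.det = 1) (htr : 0 < A.trace.re) :
    ∃ M : Matrix (Fin 2) (Fin 2) ℂ, (∀ i j, M i j ∈ eisSet) ∧
      M.det ∈ eisSet ∧ (∃ w ∈ eisSet, M.det * w = 1) ∧
      ‖M.det‖ = 1 ∧ A = M * Mᴴ := by
  have key : ∃ M : Matrix (Fin 2) (Fin 2) ℂ, (∀ i j, M i j ∈ eisSet) ∧
      (M.det = 1 ∨ M.det = -1) ∧ A = M * Mᴴ := by
    obtain ⟨hherm, hent⟩ := hA
    obtain ⟨nn, htrn⟩ : ∃ nn : ℕ, A.trace.re ≤ nn := ⟨⌈A.trace.re⌉₊, Nat.le_ceil _⟩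
    rcases le_or_gt (A 0 0).re (A 1 1).re with hle | hlt
    · exact main_aux nn A ⟨hherm, hent⟩ hdet htr htrn hle
    · set B : Matrix (Fin 2) (Fin 2) ℂ := !![A 1 1, A 1 0; A 0 1, A 0 0] with hBdef
      have hBherm : B.IsHermitian := by
        unfold Matrix.IsHermitian
        ext i j
        fin_cases i <;> fin_cases j <;>
          simp [hBdef, Matrix.conjTranspose_apply, hherm.apply]
      have hBent : ∀ i j, B i j ∈ eisSet := by
        intro i j; rw [hBdef]; fin_cases i <;> fin_cases j <;> simp <;> exact hent _ _
      have hBdet : B.det = 1 := by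
        rw [hBdef, Matrix.det_fin_two_of]
        rw [Matrix.det_fin_two] at hdet
        linear_combination hdet
      have hBtr : B.trace.re = A.trace.re := by
        rw [hBdef, Matrix.trace_fin_two_of, Matrix.trace_fin_two]
        simp [Complex.add_re]
        ring
      have hBle : (B 0 0).re ≤ (B 1 1).re := by
        rw [hBdef]; simp; exact le_of_lt hlt
      obtain ⟨N, hNent, hNdet, hNeq⟩ := main_aux nn B ⟨hBherm, hBent⟩ hBdet
        (by rw [hBtr]; exact htr) (by rw [hBtr]; exact htrn) hBle
      set S : Matrix (Fin 2) (Fin 2) ℂ := !![0, 1; 1, 0] with hS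
      have hSB : A = S * B * Sᴴ := by
        rw [hBdef, hS]
        ext i j
        fin_cases i <;> fin_cases j <;>
          simp [Matrix.mul_apply, Fin.sum_univ_two, Matrix.conjTranspose_apply]
      refine ⟨S * N, eis_mat_mul ?_ hNent, ?_, ?_⟩
      · intro i j; rw [hS]; fin_cases i <;> fin_cases j <;> simp <;>
          first | exact eis_zero | exact eis_one
      · rw [Matrix.det_mul, hS, Matrix.det_fin_two_of]
        rcases hNdet with h | h
        · right; rw [h]; ring
        · left; rw [h]; ring
      · rw [hSB, hNeq, Matrix.conjTranspose_mul]
        simp [Matrix.mul_assoc]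
  obtain ⟨M, hMent, hMdet, hMeq⟩ := key
  refine ⟨M, hMent, ?_, ?_, ?_, hMeq⟩
  · rcases hMdet with h | h <;> rw [h]
    · exact eis_one
    · exact eis_neg_one
  · rcases hMdet with h | h
    · exact ⟨1, eis_one, by rw [h]; ring⟩
    · exact ⟨-1, eis_neg_one, by rw [h]; ring⟩
  · rcases hMdet with h | h <;> rw [h] <;> simp
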